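/- Fix q ≥ 2 and φ ≠ 0 in ℚ. Define c_n = φ^{-⌊n/q⌋}. Then the generalized Pascal entry P(n,m) = c_m·c_{n-m}/c_n satisfies: P(n,m) = 1 if n mod q ≥ m mod q, and P(n,m) = φ if n mod q < m mod q, for all 0 ≤ m ≤ n. -/
import Mathlib

theorem stmt18 (q : ℕ) (hq : 2 ≤ q) (φ : ℚ) (hφ : φ ≠ 0) (c : ℕ → ℚ)
    (hc : ∀ r : ℕ, c r = φ ^ (-((r / q : ℕ) : ℤ))) (n m : ℕ) (hmn : m ≤ n) :
    (m % q ≤ n % q → c m * c (n - m) / c n = 1) ∧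
    (n % q < m % q → c m * c (n - m) / c n = φ) := by
  have hq0 : 0 < q := by omega
  have hm := Nat.div_add_mod m q
  have hn := Nat.div_add_mod n q
  have hmr := Nat.mod_lt m hq0
  have hnr := Nat.mod_lt n hq0
  have hdle : m / q ≤ n / q := Nat.div_le_div_right hmn
  have hQle : q * (m / q) ≤ q * (n / q) := Nat.mul_le_mul_left q hdle
  have key : ∀ e : ℤ, -((m / q : ℕ) : ℤ) + -(((n - m) / q : ℕ) : ℤ) - -(((n / q : ℕ)) : ℤ) = e →
      c m * c (n - m) / c n = φ ^ e := by
    intro e he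
    rw [hc, hc, hc, ← zpow_add₀ hφ, ← zpow_sub₀ hφ, he]
  constructor
  · intro h
    have hmul : q * (n / q - m / q) = q * (n / q) - q * (m / q) := by rw [Nat.mul_sub]
    have hsub : n - m = q * (n / q - m / q) + (n % q - m % q) := by omega
    have h0 : (n % q - m % q) / q = 0 := Nat.div_eq_of_lt (by omega)
    have hdiv : (n - m) / q = n / q - m / q := by
      rw [hsub, Nat.mul_add_div hq0, h0, Nat.add_zero]
    rw [key 0 (by omega), zpow_zero]
  · intro h
    have hlt : m / q < n / q := by
      rcases Nat.lt_or_ge (m / q) (n / q) with h' | h'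
      · exact h'
      · have heq : m / q = n / q := le_antisymm hdle h'
        have : q * (m / q) = q * (n / q) := by rw [heq]
        omega
    have hQlt : q * (m / q) + q ≤ q * (n / q) := by
      have h' : q * (m / q + 1) ≤ q * (n / q) := Nat.mul_le_mul_left q hlt
      rw [Nat.mul_add, Nat.mul_one] at h'
      exact h'
    have hmul : q * (n / q - m / q - 1) = q * (n / q) - q * (m / q) - q := by
      rw [Nat.mul_sub, Nat.mul_sub, Nat.mul_one]
    have hsub : n - m = q * (n / q - m / q - 1) + (q + n % q - m % q) := by omega
    have h0 : (q + n % q - m % q) / q = 0 := Nat.div_eq_of_lt (by omega)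
    have hdiv : (n - m) / q = n / q - m / q - 1 := by
      rw [hsub, Nat.mul_add_div hq0, h0, Nat.add_zero]
    rw [key 1 (by omega), zpow_one]
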